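/- arXiv:1804.07103 — 2 statements merged into one kernel-verified Lean document; each statement's English description precedes it below -/
import Mathlib

section
/- The Lanczos recurrence produces an orthonormal basis: if H is a Hermitian matrix and the Lanczos iteration (with y = τH·vᵢ − βᵢ·vᵢ₋₁, αᵢ = ⟨vᵢ, y⟩, y ← y − αᵢvᵢ, βᵢ₊₁ = ‖y‖, vᵢ₊₁ = y/βᵢ₊₁) runs with all βᵢ₊₁ ≠ 0 starting from a unit vector v₁, then the vectors v₁, ..., vₘ are pairwise orthogonal unit vectors. -/
open scoped ComplexOrder

theorem lanczos_orthonormal (N m : ℕ) (hm : 1 ≤ m)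
    (H : Matrix (Fin N) (Fin N) ℂ) (hH : H.IsHermitian) (τ : ℝ)
    (v : ℕ → EuclideanSpace ℂ (Fin N)) (α : ℕ → ℂ) (β : ℕ → ℝ)
    (hv0 : v 0 = 0) (hβ1 : β 1 = 0) (hv1 : ‖v 1‖ = 1)
    (hrec : ∀ i, 1 ≤ i → i < m →
      α i = inner (𝕜 := ℂ) (v i)
          (((τ : ℂ) • ((WithLp.equiv 2 (Fin N → ℂ)).symm (H.mulVec (v i))) - (β i : ℂ) • v (i - 1) :
            EuclideanSpace ℂ (Fin N)))
      ∧ β (i + 1)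
          = ‖((τ : ℂ) • ((WithLp.equiv 2 (Fin N → ℂ)).symm (H.mulVec (v i))) - (β i : ℂ) • v (i - 1) - α i • v i :
              EuclideanSpace ℂ (Fin N))‖
      ∧ β (i + 1) ≠ 0
      ∧ v (i + 1)
          = ((β (i + 1) : ℂ))⁻¹ •
            ((τ : ℂ) • ((WithLp.equiv 2 (Fin N → ℂ)).symm (H.mulVec (v i))) - (β i : ℂ) • v (i - 1) - α i • v i :
              EuclideanSpace ℂ (Fin N))) :
    ∀ i j, 1 ≤ i → i ≤ m → 1 ≤ j → j ≤ m →
      inner (𝕜 := ℂ) (v i) (v j) = if i = j then (1 : ℂ) else 0 := by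
  have herm : ∀ a b : EuclideanSpace ℂ (Fin N),
      inner (𝕜 := ℂ) a ((WithLp.equiv 2 (Fin N → ℂ)).symm (H.mulVec b)) =
      inner (𝕜 := ℂ) ((WithLp.equiv 2 (Fin N → ℂ)).symm (H.mulVec a)) b := by
    intro a b
    have h := (Matrix.isHermitian_iff_isSymmetric.mp hH) a b
    simpa [Matrix.toEuclideanLin_apply] using h.symm
  suffices key : ∀ k, k ≤ m → ∀ i j, 1 ≤ i → i ≤ k → 1 ≤ j → j ≤ k →
      inner (𝕜 := ℂ) (v i) (v j) = if i = j then (1 : ℂ) else 0 by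
    intro i j hi him hj hjm
    exact key m le_rfl i j hi him hj hjm
  intro k
  induction k with
  | zero => intro _ i j hi hik; omega
  | succ k ih =>
    intro hk1
    rcases Nat.eq_zero_or_pos k with hk0 | hkpos
    · subst hk0
      intro i j hi hik hj hjk
      interval_cases i; interval_cases j
      simp only [if_pos rfl]
      rw [inner_self_eq_norm_sq_to_K, hv1]; norm_num
    · have ihk := ih (by omega)
      obtain ⟨hα, hβ, hβne, hvk1⟩ := hrec k hkpos (by omega)
      -- orthogonality of v (k+1) to earlier vectors
      have hortho : ∀ j, 1 ≤ j → j ≤ k → inner (𝕜 := ℂ) (v j) (v (k+1)) = 0 := by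
        intro j hj hjk
        rw [hvk1, inner_smul_right]
        rcases eq_or_lt_of_le hjk with hjeq | hjlt
        · subst hjeq
          rw [inner_sub_right, inner_smul_right, ← hα,
            ihk j j hj le_rfl hj le_rfl, if_pos rfl]
          ring
        · -- j < k, so k ≥ 2
          have hk2 : 2 ≤ k := by omega
          obtain ⟨hαj, hβj, hβjne, hvj1⟩ := hrec j hj (by omega)
          have hHvj : (τ : ℂ) • ((WithLp.equiv 2 (Fin N → ℂ)).symm (H.mulVec (v j)))
              = (β (j+1) : ℂ) • v (j+1) + (β j : ℂ) • v (j-1) + α j • v j := by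
            have : (β (j+1) : ℂ) • v (j+1)
                = (τ : ℂ) • ((WithLp.equiv 2 (Fin N → ℂ)).symm (H.mulVec (v j)))
                  - (β j : ℂ) • v (j-1) - α j • v j := by
              rw [hvj1, smul_inv_smul₀ (by exact_mod_cast hβjne)]
            rw [this]; abel
          have hmain : (τ : ℂ) * inner (𝕜 := ℂ) (v j)
              ((WithLp.equiv 2 (Fin N → ℂ)).symm (H.mulVec (v k)))
              = (β (j+1) : ℂ) * (if j+1 = k then 1 else 0) := by
            have : (τ : ℂ) * inner (𝕜 := ℂ) (v j)
                ((WithLp.equiv 2 (Fin N → ℂ)).symm (H.mulVec (v k)))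
                = inner (𝕜 := ℂ)
                  ((τ : ℂ) • ((WithLp.equiv 2 (Fin N → ℂ)).symm (H.mulVec (v j)))) (v k) := by
              rw [herm, inner_smul_left, Complex.conj_ofReal]
            rw [this, hHvj, inner_add_left, inner_add_left, inner_smul_left,
              inner_smul_left, inner_smul_left, Complex.conj_ofReal, Complex.conj_ofReal]
            have e1 : inner (𝕜 := ℂ) (v (j+1)) (v k) = (if j+1 = k then (1:ℂ) else 0) := by
              rw [ihk (j+1) k (by omega) (by omega) (by omega) le_rfl]
            have e2 : (β j : ℂ) * inner (𝕜 := ℂ) (v (j-1)) (v k) = 0 := by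
              rcases Nat.eq_or_lt_of_le hj with h1 | h1
              · rw [← h1]; simp [hβ1]
              · rw [ihk (j-1) k (by omega) (by omega) (by omega) le_rfl, if_neg (by omega)]
                ring
            have e3 : inner (𝕜 := ℂ) (v j) (v k) = 0 := by
              rw [ihk j k hj (by omega) (by omega) le_rfl, if_neg (by omega)]
            rw [e1, e2, e3]
            ring
          have e4 : inner (𝕜 := ℂ) (v j) (v k) = 0 := by
            rw [ihk j k hj hjk hkpos le_rfl, if_neg (by omega)]
          have e5 : inner (𝕜 := ℂ) (v j) (v (k-1)) = (if j = k-1 then (1:ℂ) else 0) :=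
            ihk j (k-1) hj (by omega) (by omega) (by omega)
          rw [inner_sub_right, inner_sub_right, inner_smul_right, inner_smul_right,
            inner_smul_right, hmain, e4, e5]
          rcases eq_or_ne (j+1) k with hc | hc
          · rw [if_pos hc, if_pos (by omega), ← hc]
            ring
          · rw [if_neg hc, if_neg (by omega)]
            ring
      have hnorm : inner (𝕜 := ℂ) (v (k+1)) (v (k+1)) = 1 := by
        rw [inner_self_eq_norm_sq_to_K, hvk1, norm_smul, hβ]
        have hpos : (0:ℝ) < β (k+1) := lt_of_le_of_ne (hβ ▸ norm_nonneg _) (Ne.symm hβne)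
        rw [← hβ]
        push_cast
        rw [norm_inv, Complex.norm_real, Real.norm_eq_abs, abs_of_pos hpos]
        field_simp
        simp [hβne]
      intro i j hi hik hj hjk
      rcases eq_or_lt_of_le hik with hieq | hilt
      · rcases eq_or_lt_of_le hjk with hjeq | hjlt
        · rw [hieq, hjeq, if_pos rfl]; exact hnorm
        · rw [hieq, if_neg (by omega), ← inner_conj_symm,
            hortho j hj (by omega), map_zero]
      · rcases eq_or_lt_of_le hjk with hjeq | hjlt
        · rw [hjeq, if_neg (by omega)]
          exact hortho i hi (by omega)
        · exact ihk i j hi (by omega) hj (by omega)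
end

section
/- Krylov exactness for polynomials: if V_m is a matrix whose columns form an orthonormal basis of the Krylov subspace span{u, Hu, ..., H^{m−1}u} with v₁ = u, and T_m = V_mᴴ H V_m, then for every polynomial p of degree < m, p(H)·u = V_m·p(T_m)·e₁. -/
theorem krylov_polynomial_exactness (N m : ℕ) (hm0 : 0 < m) (hmN : m ≤ N)
    (H : Matrix (Fin N) (Fin N) ℂ) (hH : H.IsHermitian)
    (u : Fin N → ℂ)
    (hu : ∑ i, Complex.normSq (u i) = 1)
    (hind : LinearIndependent ℂ (fun k : Fin m => (H ^ (k : ℕ)).mulVec u))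
    (Vm : Matrix (Fin N) (Fin m) ℂ)
    (horth : Vm.conjTranspose * Vm = 1)
    (hspan : Submodule.span ℂ (Set.range fun j : Fin m => (fun i => Vm i j))
        = Submodule.span ℂ (Set.range fun k : Fin m => (H ^ (k : ℕ)).mulVec u))
    (hfirst : (fun i => Vm i ⟨0, hm0⟩) = u)
    (Tm : Matrix (Fin m) (Fin m) ℂ)
    (hTm : Tm = Vm.conjTranspose * H * Vm)
    (e₁ : Fin m → ℂ) (he₁ : e₁ = Pi.single ⟨0, hm0⟩ 1) :
    ∀ p : Polynomial ℂ, p.degree < (m : ℕ) →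
      (Polynomial.aeval H p).mulVec u = Vm.mulVec ((Polynomial.aeval Tm p).mulVec e₁) := by
  -- every Krylov vector is in the range of Vm.mulVec
  have hrange : ∀ k : ℕ, k < m → ∃ c : Fin m → ℂ, (H ^ k).mulVec u = Vm.mulVec c := by
    intro k hk
    have h1 : (H ^ k).mulVec u ∈
        Submodule.span ℂ (Set.range fun k : Fin m => (H ^ (k : ℕ)).mulVec u) :=
      Submodule.subset_span ⟨⟨k, hk⟩, rfl⟩
    rw [← hspan] at h1
    have h2 : Submodule.span ℂ (Set.range fun j : Fin m => (fun i => Vm i j))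
        = LinearMap.range Vm.mulVecLin := by
      rw [Matrix.range_mulVecLin]; rfl
    rw [h2] at h1
    obtain ⟨c, hc⟩ := h1
    exact ⟨c, hc.symm⟩
  have hproj : ∀ c : Fin m → ℂ, Vm.conjTranspose.mulVec (Vm.mulVec c) = c := by
    intro c
    rw [Matrix.mulVec_mulVec, horth, Matrix.one_mulVec]
  -- the key: monomial case
  have hkey : ∀ k : ℕ, k < m → (H ^ k).mulVec u = Vm.mulVec ((Tm ^ k).mulVec e₁) := by
    intro k
    induction k with
    | zero =>
      intro _
      rw [pow_zero, pow_zero, Matrix.one_mulVec, Matrix.one_mulVec, he₁,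
        Matrix.mulVec_single_one, ← hfirst]
      rfl
    | succ k ih =>
      intro hk
      have hk' : k < m := Nat.lt_of_succ_lt hk
      obtain ⟨c, hc⟩ := hrange (k + 1) hk
      have step : (H ^ (k + 1)).mulVec u = H.mulVec (Vm.mulVec ((Tm ^ k).mulVec e₁)) := by
        rw [pow_succ', ← Matrix.mulVec_mulVec, ih hk']
      have h3 : Vm.conjTranspose.mulVec ((H ^ (k + 1)).mulVec u)
          = (Tm ^ (k + 1)).mulVec e₁ := by
        rw [step, pow_succ', hTm]
        simp only [Matrix.mulVec_mulVec]
        simp only [Matrix.mul_assoc]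
      rw [← h3, hc, hproj]
  -- helper sum lemmas
  have sum_mulVec : ∀ {n' : Type} [Fintype n'] (s : Finset ℕ)
      (f : ℕ → Matrix n' n' ℂ) (v : n' → ℂ),
      (∑ i ∈ s, f i).mulVec v = ∑ i ∈ s, (f i).mulVec v := by
    intro n' _ s f v
    induction s using Finset.induction_on with
    | empty => simp [Matrix.zero_mulVec]
    | insert _ _ h ih => rw [Finset.sum_insert h, Finset.sum_insert h, Matrix.add_mulVec, ih]
  have mulVec_sum : ∀ (s : Finset ℕ) (g : ℕ → Fin m → ℂ),
      Vm.mulVec (∑ i ∈ s, g i) = ∑ i ∈ s, Vm.mulVec (g i) := by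
    intro s g
    induction s using Finset.induction_on with
    | empty => simp [Matrix.mulVec_zero]
    | insert _ _ h ih => rw [Finset.sum_insert h, Finset.sum_insert h, Matrix.mulVec_add, ih]
  intro p hdeg
  have hdegn : p.natDegree < m := by
    rcases eq_or_ne p 0 with h | h
    · simpa [h] using hm0
    · exact (Polynomial.natDegree_lt_iff_degree_lt h).mpr (by exact_mod_cast hdeg)
  rw [Polynomial.aeval_eq_sum_range (x := H), Polynomial.aeval_eq_sum_range (x := Tm),
    sum_mulVec, sum_mulVec, mulVec_sum]
  refine Finset.sum_congr rfl fun i hi => ?_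
  have him : i < m := lt_of_lt_of_le (Finset.mem_range.mp hi) hdegn
  rw [Matrix.smul_mulVec, Matrix.smul_mulVec, Matrix.mulVec_smul,
    hkey i him]
end
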